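/- On the hyperboloid model of the hyperbolic plane, the point c minimizing the function F(x) = ∑_{k=1}^n (cosh d_H(x,p_k) - 1) over x ∈ H, for given points p₁,...,pₙ ∈ H, exists, is unique, and equals the radial projection of the Euclidean average: c = π_H((p₁+⋯+pₙ)/n). -/

import Mathlib

open Finset

/-- The Minkowski bilinear form `⟨u,v⟩ = u₁v₁ + u₂v₂ - u₃v₃` on `ℝ³`. -/
def mink (u v : Fin 3 → ℝ) : ℝ := u 0 * v 0 + u 1 * v 1 - u 2 * v 2

/-- The hyperboloid model `H = {(x,y,z) : z² - x² - y² = 1, z > 0}`. -/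
def Hyp : Set (Fin 3 → ℝ) := {p | mink p p = -1 ∧ 0 < p 2}

/-- The inverse hyperbolic cosine, `arcosh x = log (x + √(x²-1))` for `x ≥ 1`. -/
noncomputable def arcosh (x : ℝ) : ℝ := Real.log (x + Real.sqrt (x ^ 2 - 1))

/-- Hyperbolic distance on the hyperboloid: `cosh d(p,q) = -⟨p,q⟩`. -/
noncomputable def dH (p q : Fin 3 → ℝ) : ℝ := arcosh (-(mink p q))

/-- The radial projection onto the hyperboloid, `π_H(v) = v/√(-⟨v,v⟩)`. -/
noncomputable def projH (v : Fin 3 → ℝ) : Fin 3 → ℝ :=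
  (Real.sqrt (-(mink v v)))⁻¹ • v

lemma mink_comm (u v : Fin 3 → ℝ) : mink u v = mink v u := by unfold mink; ring

lemma mink_smul_right (r : ℝ) (u v : Fin 3 → ℝ) : mink u (r • v) = r * mink u v := by
  simp [mink, Pi.smul_apply, smul_eq_mul]; ring

lemma mink_smul_left (r : ℝ) (u v : Fin 3 → ℝ) : mink (r • u) v = r * mink u v := by
  simp [mink, Pi.smul_apply, smul_eq_mul]; ring

lemma mink_sum_right {n : ℕ} (x : Fin 3 → ℝ) (f : Fin n → (Fin 3 → ℝ)) :
    mink x (∑ k, f k) = ∑ k, mink x (f k) := by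
  simp [mink, Finset.sum_apply, Finset.mul_sum, Finset.sum_sub_distrib,
    Finset.sum_add_distrib]

lemma mink_le_neg_one {p q : Fin 3 → ℝ} (hp : p ∈ Hyp) (hq : q ∈ Hyp) :
    mink p q ≤ -1 := by
  obtain ⟨hp1, hp2⟩ := hp
  obtain ⟨hq1, hq2⟩ := hq
  unfold mink at *
  nlinarith [sq_nonneg (p 0 - q 0), sq_nonneg (p 1 - q 1),
    sq_nonneg (p 0 * q 1 - p 1 * q 0), mul_pos hp2 hq2,
    sq_nonneg (p 2 - q 2), sq_nonneg (p 2 * q 2 + p 0 * q 0 + p 1 * q 1 + 1)]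

lemma eq_of_mink_eq_neg_one {p q : Fin 3 → ℝ} (hp : p ∈ Hyp) (hq : q ∈ Hyp)
    (h : mink p q = -1) : p = q := by
  obtain ⟨hp1, hp2⟩ := hp
  obtain ⟨hq1, hq2⟩ := hq
  unfold mink at *
  have hsq : (p 0 - q 0) ^ 2 + (p 1 - q 1) ^ 2 + (p 0 * q 1 - p 1 * q 0) ^ 2 = 0 := by
    nlinarith [mul_pos hp2 hq2, sq_nonneg (p 0 - q 0), sq_nonneg (p 1 - q 1),
      sq_nonneg (p 0 * q 1 - p 1 * q 0), sq_nonneg (p 2 - q 2)]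
  have h0 : p 0 = q 0 := by nlinarith [sq_nonneg (p 0 - q 0), sq_nonneg (p 1 - q 1), sq_nonneg (p 0 * q 1 - p 1 * q 0)]
  have h1 : p 1 = q 1 := by nlinarith [sq_nonneg (p 0 - q 0), sq_nonneg (p 1 - q 1), sq_nonneg (p 0 * q 1 - p 1 * q 0)]
  have h2 : p 2 = q 2 := by nlinarith [mul_pos hp2 hq2, sq_nonneg (p 2 - q 2)]
  funext i
  fin_cases i <;> assumption

lemma cosh_arcosh {x : ℝ} (hx : 1 ≤ x) : Real.cosh (arcosh x) = x := by
  have h1 : (0:ℝ) ≤ x ^ 2 - 1 := by nlinarith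
  have hs := Real.sqrt_nonneg (x ^ 2 - 1)
  have hy : 0 < x + Real.sqrt (x ^ 2 - 1) := by linarith
  have hinv : (x + Real.sqrt (x ^ 2 - 1))⁻¹ = x - Real.sqrt (x ^ 2 - 1) := by
    refine inv_eq_of_mul_eq_one_right ?_
    have hss : Real.sqrt (x ^ 2 - 1) ^ 2 = x ^ 2 - 1 := Real.sq_sqrt h1
    nlinarith [hss]
  rw [arcosh, Real.cosh_log hy, hinv]
  ring

/-- For points `p₁,…,pₙ` on the hyperboloid, the function
`F(x) = ∑ₖ (cosh d_H(x,pₖ) - 1)` on `H` attains its minimum at a unique point,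
namely the radial projection of the Euclidean average `c = π_H((p₁+⋯+pₙ)/n)`. -/
theorem cosh_center_of_mass_minimizer
    (n : ℕ) (hn : 0 < n) (p : Fin n → (Fin 3 → ℝ)) (hp : ∀ k, p k ∈ Hyp)
    (F : (Fin 3 → ℝ) → ℝ)
    (hF : F = fun x => ∑ k, (Real.cosh (dH x (p k)) - 1))
    (c : Fin 3 → ℝ) (hc : c = projH ((n : ℝ)⁻¹ • ∑ k, p k)) :
    c ∈ Hyp ∧ (∀ x ∈ Hyp, F c ≤ F x) ∧ (∀ x ∈ Hyp, F x = F c → x = c) := by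
  have hne : Nonempty (Fin n) := ⟨⟨0, hn⟩⟩
  have hnR : (0:ℝ) < (n:ℝ) := by exact_mod_cast hn
  set s : Fin 3 → ℝ := ∑ k, p k with hs
  -- s 2 > 0
  have hs2 : 0 < s 2 := by
    rw [hs, Finset.sum_apply]
    exact Finset.sum_pos (fun k _ => (hp k).2) Finset.univ_nonempty
  -- mink s s < 0
  have hss : mink s s ≤ -(n:ℝ)^2 := by
    rw [hs, mink_sum_right]
    calc ∑ j, mink (∑ k, p k) (p j)
        = ∑ j, ∑ k, mink (p k) (p j) := by
          refine Finset.sum_congr rfl fun j _ => ?_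
          rw [mink_comm, mink_sum_right]
          exact Finset.sum_congr rfl fun k _ => mink_comm _ _
      _ ≤ ∑ j : Fin n, ∑ k : Fin n, (-1 : ℝ) := by
          refine Finset.sum_le_sum fun j _ => Finset.sum_le_sum fun k _ => ?_
          exact mink_le_neg_one (hp k) (hp j)
      _ = -(n:ℝ)^2 := by simp; ring
  have hssneg : mink s s < 0 := lt_of_le_of_lt hss (by nlinarith)
  set l : ℝ := Real.sqrt (-(mink s s)) with hl
  have hlpos : 0 < l := Real.sqrt_pos.mpr (by linarith)
  have hlsq : l ^ 2 = -(mink s s) := Real.sq_sqrt (by linarith)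
  -- c = l⁻¹ • s
  have hcs : c = l⁻¹ • s := by
    rw [hc, projH]
    have hm : -(mink ((n:ℝ)⁻¹ • s) ((n:ℝ)⁻¹ • s)) = ((n:ℝ)⁻¹)^2 * (-(mink s s)) := by
      rw [mink_smul_left, mink_smul_right]; ring
    rw [hm, Real.sqrt_mul (sq_nonneg _), Real.sqrt_sq (by positivity), ← hl,
      smul_smul]
    congr 1
    rw [mul_inv]
    field_simp
  have hslc : s = l • c := by
    rw [hcs, smul_smul, mul_inv_cancel₀ (ne_of_gt hlpos), one_smul]
  -- c ∈ Hyp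
  have hcH : c ∈ Hyp := by
    constructor
    · rw [hcs, mink_smul_left, mink_smul_right]
      have : l⁻¹ * (l⁻¹ * mink s s) = -(l⁻¹^2 * l^2) := by rw [hlsq]; ring
      rw [this, inv_pow, inv_mul_cancel₀ (by positivity)]
    · rw [hcs, Pi.smul_apply, smul_eq_mul]
      positivity
  -- F on Hyp
  have hFx : ∀ x ∈ Hyp, F x = -(mink x s) - n := by
    intro x hx
    rw [hF]
    simp only
    have : ∀ k : Fin n, Real.cosh (dH x (p k)) - 1 = -(mink x (p k)) - 1 := by
      intro k
      rw [dH, cosh_arcosh (by linarith [mink_le_neg_one hx (hp k)])]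
    rw [Finset.sum_congr rfl fun k _ => this k]
    rw [Finset.sum_sub_distrib, hs, mink_sum_right, ← Finset.sum_neg_distrib]
    simp
  have hFc : F c = l - n := by
    rw [hFx c hcH, hslc, mink_smul_right, hcH.1]
    ring
  have hFxval : ∀ x ∈ Hyp, F x = -l * mink x c - n := by
    intro x hx
    rw [hFx x hx, hslc, mink_smul_right]
    ring
  refine ⟨hcH, ?_, ?_⟩
  · intro x hx
    rw [hFc, hFxval x hx]
    have := mink_le_neg_one hx hcH
    nlinarith
  · intro x hx hFeq
    rw [hFc, hFxval x hx] at hFeq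
    have hxc : mink x c = -1 := by
      have : -l * mink x c = l := by linarith
      field_simp at this
      nlinarith [this]
    exact eq_of_mink_eq_neg_one hx hcH hxc
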